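/- Let f₁, f₂ be Morse-Smale diffeomorphisms in MS^{2k}(1,1,1) (one sink, one source, one saddle) with saddles σ_{f₁}, σ_{f₂}. If f₁^{k₁} and f₂^{k₂} are conjugate for some positive integers k₁, k₂, then the stable manifolds W^s(σ_{f₁}) and W^s(σ_{f₂}) have equivalent embedding. -/
import Mathlib


open Filter Topology Set Metric

section Defs

variable {M : Type*} [MetricSpace M]

/-- The non-wandering set of a homeomorphism `f`. -/
def nonWanderingSet (f : M ≃ₜ M) : Set M :=
  {p | ∀ U ∈ 𝓝 p, ∃ n : ℕ, 1 ≤ n ∧ ((⇑f)^[n] '' U ∩ U).Nonempty}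

/-- The stable manifold `W^s(p)` of a fixed point `p` of `f`: points whose forward
orbit converges to `p`. -/
def stableManifold (f : M ≃ₜ M) (p : M) : Set M :=
  {y | Tendsto (fun k => (⇑f)^[k] y) atTop (𝓝 p)}

/-- A Morse–Smale diffeomorphism of class `MS^{2k}(1,1,1)`: a homeomorphism of a
closed `2k`-manifold whose non-wandering set consists of exactly one hyperbolic
sink, one hyperbolic source and one hyperbolic saddle (each a fixed point). -/
structure MS111 (f : M ≃ₜ M) where
  /-- the sink -/
  snk : M
  /-- the source -/
  src : M
  /-- the saddle -/
  sdl : M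
  snk_fixed : f snk = snk
  src_fixed : f src = src
  sdl_fixed : f sdl = sdl
  distinct : snk ≠ src ∧ snk ≠ sdl ∧ src ≠ sdl
  nw_eq : nonWanderingSet f = {snk, src, sdl}
  /-- the sink is attracting: it has a trapping neighborhood shrinking to it -/
  snk_attracting : ∃ U, IsOpen U ∧ snk ∈ U ∧ f '' closure U ⊆ U ∧
    (⋂ n : ℕ, (⇑f)^[n] '' U) = {snk}
  /-- the source is repelling -/
  src_repelling : ∃ U, IsOpen U ∧ src ∈ U ∧ f.symm '' closure U ⊆ U ∧
    (⋂ n : ℕ, (⇑f.symm)^[n] '' U) = {src}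
  /-- the saddle has nontrivial stable and unstable manifolds -/
  sdl_saddle : (stableManifold f sdl \ {sdl}).Nonempty ∧
    (stableManifold f.symm sdl \ {sdl}).Nonempty

end Defs

/-- Submanifolds `N₁ ⊆ M₁`, `N₂ ⊆ M₂` have equivalent embedding: there are open
neighborhoods `U₁, U₂` of their closures and a homeomorphism `h : U₁ → U₂` with
`h(N₁) = N₂`. -/
def EquivalentEmbedding {M₁ M₂ : Type*} [TopologicalSpace M₁] [TopologicalSpace M₂]
    (N₁ : Set M₁) (N₂ : Set M₂) : Prop :=
  ∃ U₁ : Set M₁, ∃ U₂ : Set M₂, IsOpen U₁ ∧ IsOpen U₂ ∧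
    closure N₁ ⊆ U₁ ∧ closure N₂ ⊆ U₂ ∧
      ∃ h : M₁ → M₂, ∃ g : M₂ → M₁,
        ContinuousOn h U₁ ∧ ContinuousOn g U₂ ∧ h '' U₁ = U₂ ∧
          (∀ x ∈ U₁, g (h x) = x) ∧ (∀ y ∈ U₂, h (g y) = y) ∧ h '' N₁ = N₂

lemma mem_stable_of_tendsto_mul {M : Type*} [MetricSpace M] (f : M ≃ₜ M) {p y : M}
    (hp : f p = p) {k : ℕ} (hk : 1 ≤ k)
    (H : Tendsto (fun n => (⇑f)^[k * n] y) atTop (𝓝 p)) :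
    Tendsto (fun n => (⇑f)^[n] y) atTop (𝓝 p) := by
  have hj : ∀ j : ℕ, Tendsto (fun n => (⇑f)^[k * n + j] y) atTop (𝓝 p) := by
    intro j
    have hc : Continuous ((⇑f)^[j]) := f.continuous.iterate j
    have h2 := (hc.tendsto p).comp H
    have hpj : (⇑f)^[j] p = p := Function.iterate_fixed hp j
    simpa [Function.comp_def, hpj, Nat.add_comm, Function.iterate_add_apply] using h2
  rw [Metric.tendsto_atTop]
  intro ε hε
  have hfin : ∀ᶠ n in atTop, ∀ j ∈ Finset.range k, dist ((⇑f)^[k * n + j] y) p < ε := by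
    rw [eventually_all_finset]
    intro j _
    exact (hj j).eventually (eventually_nhds_iff.2
      ⟨Metric.ball p ε, fun x hx => hx, Metric.isOpen_ball, Metric.mem_ball_self hε⟩)
  obtain ⟨N, hN⟩ := eventually_atTop.1 hfin
  refine ⟨k * N, fun m hm => ?_⟩
  have h1 : N ≤ m / k := (Nat.le_div_iff_mul_le (by omega)).2 (by rw [Nat.mul_comm]; exact hm)
  have h2 : m % k ∈ Finset.range k := Finset.mem_range.2 (Nat.mod_lt _ (by omega))
  have := hN (m / k) h1 (m % k) h2
  rwa [Nat.div_add_mod] at this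

lemma eq_of_tendsto_symm_iterate {M : Type*} [MetricSpace M] (f : M ≃ₜ M) {q y : M}
    {U : Set M} (hUo : IsOpen U) (hq : q ∈ U) (htrap : f '' closure U ⊆ U)
    (hiU : (⋂ n : ℕ, (⇑f)^[n] '' U) = {q})
    {a : ℕ → ℕ} (ha : Tendsto a atTop atTop)
    (H : Tendsto (fun n => (⇑f.symm)^[a n] y) atTop (𝓝 q)) : y = q := by
  have hfU : f '' U ⊆ U := fun x ⟨u, hu, hx⟩ => htrap ⟨u, subset_closure hu, hx⟩
  have hanti : Antitone (fun n => (⇑f)^[n] '' U) := by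
    apply antitone_nat_of_succ_le
    intro n
    calc (⇑f)^[n + 1] '' U = (⇑f)^[n] '' (f '' U) := by
          rw [Function.iterate_succ, Set.image_comp]
      _ ⊆ (⇑f)^[n] '' U := Set.image_mono hfU
  have hinv : ∀ (j : ℕ) (x : M), (⇑f)^[j] ((⇑f.symm)^[j] x) = x := by
    intro j x
    exact Function.LeftInverse.iterate (fun z => f.apply_symm_apply z) j x
  have hy : y ∈ ⋂ n : ℕ, (⇑f)^[n] '' U := by
    rw [Set.mem_iInter]
    intro m
    have h1 : ∀ᶠ n in atTop, m ≤ a n := ha.eventually (eventually_ge_atTop m)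
    have h2 : ∀ᶠ n in atTop, (⇑f.symm)^[a n] y ∈ U := H (hUo.mem_nhds hq)
    obtain ⟨n, hn1, hn2⟩ := (h1.and h2).exists
    have : y ∈ (⇑f)^[a n] '' U := ⟨(⇑f.symm)^[a n] y, hn2, hinv (a n) y⟩
    exact hanti hn1 this
  rw [hiU] at hy
  exact hy

lemma conj_iterate {M₁ M₂ : Type*} (F₁ : M₁ → M₁) (F₂ : M₂ → M₂) (h : M₁ → M₂)
    (hc : ∀ x, h (F₁ x) = F₂ (h x)) :
    ∀ (n : ℕ) (x : M₁), h (F₁^[n] x) = F₂^[n] (h x) := by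
  intro n
  induction n with
  | zero => intro x; simp
  | succ n ih =>
    intro x
    rw [Function.iterate_succ_apply, Function.iterate_succ_apply, ih, hc]

/-- Let `f₁, f₂` be Morse–Smale diffeomorphisms in `MS^{2k}(1,1,1)` (one sink, one
source, one saddle) on closed `2k`-manifolds, with saddles `σ_{f₁}, σ_{f₂}`. If
`f₁^{k₁}` and `f₂^{k₂}` are conjugate for some positive integers `k₁, k₂`, then
the stable manifolds `W^s(σ_{f₁})` and `W^s(σ_{f₂})` have equivalent embedding. -/
theorem equivalentEmbedding_of_iterates_conjugate
    {k : ℕ} {M₁ M₂ : Type*} [MetricSpace M₁] [CompactSpace M₁]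
    [ChartedSpace (EuclideanSpace ℝ (Fin (2 * k))) M₁]
    [MetricSpace M₂] [CompactSpace M₂]
    [ChartedSpace (EuclideanSpace ℝ (Fin (2 * k))) M₂]
    (f₁ : M₁ ≃ₜ M₁) (f₂ : M₂ ≃ₜ M₂) (D₁ : MS111 f₁) (D₂ : MS111 f₂)
    (k₁ k₂ : ℕ) (hk₁ : 1 ≤ k₁) (hk₂ : 1 ≤ k₂)
    (hconj : ∃ h : M₁ ≃ₜ M₂, ∀ x, h ((⇑f₁)^[k₁] x) = (⇑f₂)^[k₂] (h x)) :
    EquivalentEmbedding (stableManifold f₁ D₁.sdl) (stableManifold f₂ D₂.sdl) := by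
  obtain ⟨h, hc⟩ := hconj
  have hmul₁ : Tendsto (fun n => k₁ * n) atTop atTop :=
    tendsto_atTop_mono (fun n => Nat.le_mul_of_pos_left n (by omega)) tendsto_id
  have hmul₂ : Tendsto (fun n => k₂ * n) atTop atTop :=
    tendsto_atTop_mono (fun n => Nat.le_mul_of_pos_left n (by omega)) tendsto_id
  -- iterated conjugacy (forward)
  have hcn : ∀ (n : ℕ) (x : M₁), h ((⇑f₁)^[k₁ * n] x) = (⇑f₂)^[k₂ * n] (h x) := by
    intro n x
    have := conj_iterate ((⇑f₁)^[k₁]) ((⇑f₂)^[k₂]) h hc n x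
    rwa [← Function.iterate_mul, ← Function.iterate_mul] at this
  -- iterated conjugacy (inverse)
  have hcs : ∀ x, h ((⇑f₁.symm)^[k₁] x) = (⇑f₂.symm)^[k₂] (h x) := by
    intro x
    have hinj : Function.Injective ((⇑f₂)^[k₂]) := f₂.injective.iterate k₂
    apply hinj
    have l1 : ∀ (j : ℕ) (z : M₁), (⇑f₁)^[j] ((⇑f₁.symm)^[j] z) = z := fun j z =>
      Function.LeftInverse.iterate (fun w => f₁.apply_symm_apply w) j z
    have l2 : ∀ (j : ℕ) (z : M₂), (⇑f₂)^[j] ((⇑f₂.symm)^[j] z) = z := fun j z =>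
      Function.LeftInverse.iterate (fun w => f₂.apply_symm_apply w) j z
    rw [← hc, l1, l2]
  have hcsn : ∀ (n : ℕ) (x : M₁), h ((⇑f₁.symm)^[k₁ * n] x) = (⇑f₂.symm)^[k₂ * n] (h x) := by
    intro n x
    have := conj_iterate ((⇑f₁.symm)^[k₁]) ((⇑f₂.symm)^[k₂]) h hcs n x
    rwa [← Function.iterate_mul, ← Function.iterate_mul] at this
  -- inverse direction conjugacy
  have hcn' : ∀ (n : ℕ) (y : M₂), h.symm ((⇑f₂)^[k₂ * n] y) = (⇑f₁)^[k₁ * n] (h.symm y) := by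
    intro n y
    apply h.injective
    rw [h.apply_symm_apply, hcn, h.apply_symm_apply]
  -- h maps σ₁ to a fixed point of f₂^[k₂] which is nonwandering for f₂
  have hfix1 : (⇑f₁)^[k₁] D₁.sdl = D₁.sdl := Function.iterate_fixed D₁.sdl_fixed k₁
  have hfixp : (⇑f₂)^[k₂] (h D₁.sdl) = h D₁.sdl := by rw [← hc, hfix1]
  have hnw : h D₁.sdl ∈ nonWanderingSet f₂ := by
    intro U hU
    exact ⟨k₂, hk₂, ⟨h D₁.sdl, ⟨h D₁.sdl, mem_of_mem_nhds hU, hfixp⟩, mem_of_mem_nhds hU⟩⟩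
  rw [D₂.nw_eq] at hnw
  -- key : h σ₁ = σ₂
  have key : h D₁.sdl = D₂.sdl := by
    rcases hnw with h1 | h1 | h1
    · -- h σ₁ = snk₂ : contradiction via nontrivial unstable manifold
      exfalso
      obtain ⟨z, hz, hzne⟩ := D₁.sdl_saddle.2
      obtain ⟨U, hUo, hqU, htrap, hiU⟩ := D₂.snk_attracting
      have hz1 : Tendsto (fun n => (⇑f₁.symm)^[k₁ * n] z) atTop (𝓝 D₁.sdl) := hz.comp hmul₁
      have hz2 : Tendsto (fun n => (⇑f₂.symm)^[k₂ * n] (h z)) atTop (𝓝 (h D₁.sdl)) := by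
        have := (h.continuous.tendsto D₁.sdl).comp hz1
        simpa [Function.comp_def, hcsn] using this
      rw [h1] at hz2
      have heq : h z = D₂.snk :=
        eq_of_tendsto_symm_iterate f₂ hUo hqU htrap hiU hmul₂ hz2
      exact hzne (h.injective (heq.trans h1.symm))
    · -- h σ₁ = src₂ : contradiction via nontrivial stable manifold
      exfalso
      obtain ⟨z, hz, hzne⟩ := D₁.sdl_saddle.1
      obtain ⟨U, hUo, hqU, htrap, hiU⟩ := D₂.src_repelling
      have hz1 : Tendsto (fun n => (⇑f₁)^[k₁ * n] z) atTop (𝓝 D₁.sdl) := hz.comp hmul₁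
      have hz2 : Tendsto (fun n => (⇑f₂)^[k₂ * n] (h z)) atTop (𝓝 (h D₁.sdl)) := by
        have := (h.continuous.tendsto D₁.sdl).comp hz1
        simpa [Function.comp_def, hcn] using this
      rw [h1] at hz2
      have hz2' : Tendsto (fun n => (⇑f₂.symm.symm)^[k₂ * n] (h z)) atTop (𝓝 D₂.src) := by
        simpa [Homeomorph.symm_symm] using hz2
      have heq : h z = D₂.src :=
        eq_of_tendsto_symm_iterate f₂.symm hUo hqU htrap hiU hmul₂ hz2'
      exact hzne (h.injective (heq.trans h1.symm))
    · exact h1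
  -- h maps the stable manifold of σ₁ onto that of σ₂
  have himg : h '' stableManifold f₁ D₁.sdl = stableManifold f₂ D₂.sdl := by
    apply Set.Subset.antisymm
    · rintro _ ⟨y, hy, rfl⟩
      have hy1 : Tendsto (fun n => (⇑f₁)^[k₁ * n] y) atTop (𝓝 D₁.sdl) := hy.comp hmul₁
      have hy2 : Tendsto (fun n => (⇑f₂)^[k₂ * n] (h y)) atTop (𝓝 (h D₁.sdl)) := by
        have := (h.continuous.tendsto D₁.sdl).comp hy1
        simpa [Function.comp_def, hcn] using this
      rw [key] at hy2
      exact mem_stable_of_tendsto_mul f₂ D₂.sdl_fixed hk₂ hy2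
    · intro y hy
      refine ⟨h.symm y, ?_, h.apply_symm_apply y⟩
      have hy1 : Tendsto (fun n => (⇑f₂)^[k₂ * n] y) atTop (𝓝 D₂.sdl) := hy.comp hmul₂
      have hy2 : Tendsto (fun n => (⇑f₁)^[k₁ * n] (h.symm y)) atTop (𝓝 (h.symm D₂.sdl)) := by
        have := (h.symm.continuous.tendsto D₂.sdl).comp hy1
        simpa [Function.comp_def, hcn'] using this
      rw [← key, h.symm_apply_apply] at hy2
      exact mem_stable_of_tendsto_mul f₁ D₁.sdl_fixed hk₁ hy2
  exact ⟨Set.univ, Set.univ, isOpen_univ, isOpen_univ, Set.subset_univ _, Set.subset_univ _,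
    h, h.symm, h.continuous.continuousOn, h.symm.continuous.continuousOn,
    by simp, fun x _ => h.symm_apply_apply x, fun y _ => h.apply_symm_apply y, himg⟩
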